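/- For discrete (X, Y, R) with positivity, the joint distribution admits the odds ratio factorization f(y, r | x) = OR(y, r | x) f(y | R = 1, x) p(r | x, y_0) / C(x), where OR(y, r | x) = [p(r | x, y) p(R=1 | x, y_0)] / [p(r | x, y_0) p(R=1 | x, y)] and C(x) = Σ_{r'} E{OR(Y, r' | x) | R = 1, x} p(r' | x, y_0). -/

import Mathlib

open Finset
open scoped Classical

noncomputable def pr {Ω : Type*} [Fintype Ω] (μ : Ω → ℝ) (A : Ω → Prop) : ℝ :=
  ∑ ω, if A ω then μ ω else 0

noncomputable def cpr {Ω : Type*} [Fintype Ω] (μ : Ω → ℝ) (A B : Ω → Prop) : ℝ :=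
  pr μ (fun ω => A ω ∧ B ω) / pr μ B

section

variable {Ω 𝒳 𝒴 : Type*} [Fintype Ω] [Fintype 𝒴] {p : ℕ}

/-- The propensity `p(R = r | X = x, Y = y)` of missingness pattern `r`. -/
noncomputable def patProp (μ : Ω → ℝ) (X : Ω → 𝒳) (Y : Ω → Fin p → 𝒴)
    (R : Ω → Fin p → Bool) (r : Fin p → Bool) (x : 𝒳) (y : Fin p → 𝒴) : ℝ :=
  cpr μ (fun ω => ∀ j, R ω j = r j) (fun ω => X ω = x ∧ ∀ j, Y ω j = y j)

/-- The odds ratio function `OR(y, r | x)` with reference value `y₀`. -/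
noncomputable def orFn (μ : Ω → ℝ) (X : Ω → 𝒳) (Y : Ω → Fin p → 𝒴)
    (R : Ω → Fin p → Bool) (y₀ : Fin p → 𝒴) (y : Fin p → 𝒴) (r : Fin p → Bool)
    (x : 𝒳) : ℝ :=
  (patProp μ X Y R r x y * patProp μ X Y R (fun _ => true) x y₀) /
    (patProp μ X Y R r x y₀ * patProp μ X Y R (fun _ => true) x y)

/-- The baseline outcome density `f(y | R = 1, x)` of the complete cases. -/
noncomputable def baseOut (μ : Ω → ℝ) (X : Ω → 𝒳) (Y : Ω → Fin p → 𝒴)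
    (R : Ω → Fin p → Bool) (y : Fin p → 𝒴) (x : 𝒳) : ℝ :=
  cpr μ (fun ω => ∀ j, Y ω j = y j) (fun ω => X ω = x ∧ ∀ j, R ω j = true)

lemma pr_congr' {Ω : Type*} [Fintype Ω] (μ : Ω → ℝ) {A B : Ω → Prop}
    (h : ∀ ω, A ω ↔ B ω) : pr μ A = pr μ B :=
  Finset.sum_congr rfl fun ω _ => by simp only [h ω]

lemma pr_mono' {Ω : Type*} [Fintype Ω] {μ : Ω → ℝ} (hμ0 : ∀ ω, 0 ≤ μ ω)
    {A B : Ω → Prop} (h : ∀ ω, A ω → B ω) : pr μ A ≤ pr μ B :=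
  Finset.sum_le_sum fun ω _ => by
    by_cases hA : A ω
    · simp [hA, h ω hA]
    · by_cases hB : B ω <;> simp [hA, hB, hμ0 ω]

/-- the odds ratio factorization of the joint distribution:
`f(y, r | x) = OR(y, r | x) f(y | R = 1, x) p(r | x, y₀) / C(x)` with
`C(x) = Σ_{r'} E{OR(Y, r' | x) | R = 1, x} p(r' | x, y₀)`. -/
theorem stmt8 (μ : Ω → ℝ) (hμ0 : ∀ ω, 0 ≤ μ ω) (hμ1 : ∑ ω, μ ω = 1)
    (X : Ω → 𝒳) (Y : Ω → Fin p → 𝒴) (R : Ω → Fin p → Bool)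
    (x : 𝒳) (y₀ : Fin p → 𝒴)
    (hsupp : ∀ y' : Fin p → 𝒴, pr μ (fun ω => X ω = x ∧ ∀ j, Y ω j = y' j) > 0)
    (hpos : ∀ (r' : Fin p → Bool) (y' : Fin p → 𝒴), patProp μ X Y R r' x y' > 0)
    (y : Fin p → 𝒴) (r : Fin p → Bool) :
    cpr μ (fun ω => (∀ j, Y ω j = y j) ∧ ∀ j, R ω j = r j) (fun ω => X ω = x)
      = orFn μ X Y R y₀ y r x * baseOut μ X Y R y x * patProp μ X Y R r x y₀ /
        ∑ r' : Fin p → Bool,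
          (∑ y' : Fin p → 𝒴, orFn μ X Y R y₀ y' r' x * baseOut μ X Y R y' x) *
            patProp μ X Y R r' x y₀ := by
  set J : (Fin p → Bool) → (Fin p → 𝒴) → ℝ := fun r' y' =>
    pr μ (fun ω => (∀ j, R ω j = r' j) ∧ (X ω = x ∧ ∀ j, Y ω j = y' j)) with hJ
  set a : (Fin p → 𝒴) → ℝ := fun y' =>
    pr μ (fun ω => X ω = x ∧ ∀ j, Y ω j = y' j) with ha
  have hP : ∀ r' y', patProp μ X Y R r' x y' = J r' y' / a y' := fun _ _ => rfl
  have hapos : ∀ y', 0 < a y' := hsupp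
  have hJpos : ∀ r' y', 0 < J r' y' := by
    intro r' y'
    have h := hpos r' y'
    rw [hP] at h
    have := mul_pos h (hapos y')
    rwa [div_mul_cancel₀ _ (hapos y').ne'] at this
  set B := pr μ (fun ω => X ω = x ∧ ∀ j, R ω j = true) with hB
  have hBpos : 0 < B :=
    lt_of_lt_of_le (hJpos (fun _ => true) y₀)
      (pr_mono' hμ0 fun ω h => ⟨h.2.1, h.1⟩)
  have hbase : ∀ y', baseOut μ X Y R y' x = J (fun _ => true) y' / B := by
    intro y'
    unfold baseOut cpr
    congr 1
    exact pr_congr' μ fun ω => by constructor <;> (rintro ⟨h1, h2, h3⟩; exact ⟨h3, h2, h1⟩)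
  set PX := pr μ (fun ω => X ω = x) with hPX
  have hPXpos : 0 < PX :=
    lt_of_lt_of_le (hapos y₀) (pr_mono' hμ0 fun ω h => h.1)
  have hpart : (∑ r' : Fin p → Bool, ∑ y' : Fin p → 𝒴, J r' y') = PX := by
    simp only [hJ, hPX, pr]
    rw [Finset.sum_congr rfl fun r' _ => Finset.sum_comm, Finset.sum_comm]
    refine Finset.sum_congr rfl fun ω _ => ?_
    have key : ∀ (r' : Fin p → Bool) (y' : Fin p → 𝒴),
        ((∀ j, R ω j = r' j) ∧ (X ω = x ∧ ∀ j, Y ω j = y' j)) ↔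
        (r' = R ω ∧ (y' = Y ω ∧ X ω = x)) := by
      intro r' y'
      constructor
      · rintro ⟨h1, h2, h3⟩
        exact ⟨(funext fun j => (h1 j).symm), (funext fun j => (h3 j).symm), h2⟩
      · rintro ⟨rfl, rfl, h2⟩
        exact ⟨fun j => rfl, h2, fun j => rfl⟩
    simp only [key, ite_and]
    simp [Finset.sum_ite_eq']
  set c := patProp μ X Y R (fun _ => true) x y₀ / B with hc
  have hcpos : 0 < c := div_pos (hpos _ _) hBpos
  have hterm : ∀ r' y', orFn μ X Y R y₀ y' r' x * baseOut μ X Y R y' x *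
      patProp μ X Y R r' x y₀ = J r' y' * c := by
    intro r' y'
    rw [hbase, hc]
    unfold orFn
    rw [hP r' y', hP r' y₀, hP (fun _ => true) y₀, hP (fun _ => true) y']
    have h1 : J r' y₀ ≠ 0 := (hJpos r' y₀).ne'
    have h2 : J (fun _ => true) y' ≠ 0 := (hJpos (fun _ => true) y').ne'
    have h3 : J (fun _ => true) y₀ ≠ 0 := (hJpos (fun _ => true) y₀).ne'
    have h4 : a y' ≠ 0 := (hapos y').ne'
    have h5 : a y₀ ≠ 0 := (hapos y₀).ne'
    have h6 : B ≠ 0 := hBpos.ne'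
    field_simp
  have hLHS : cpr μ (fun ω => (∀ j, Y ω j = y j) ∧ ∀ j, R ω j = r j)
      (fun ω => X ω = x) = J r y / PX := by
    unfold cpr
    congr 1
    exact pr_congr' μ fun ω => by
      constructor
      · rintro ⟨⟨h1, h2⟩, h3⟩; exact ⟨h2, h3, h1⟩
      · rintro ⟨h1, h2, h3⟩; exact ⟨⟨h3, h1⟩, h2⟩
  have hden : (∑ r' : Fin p → Bool,
      (∑ y' : Fin p → 𝒴, orFn μ X Y R y₀ y' r' x * baseOut μ X Y R y' x) *
        patProp μ X Y R r' x y₀) = PX * c := by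
    calc (∑ r' : Fin p → Bool,
        (∑ y' : Fin p → 𝒴, orFn μ X Y R y₀ y' r' x * baseOut μ X Y R y' x) *
          patProp μ X Y R r' x y₀)
        = ∑ r' : Fin p → Bool, ∑ y' : Fin p → 𝒴,
            orFn μ X Y R y₀ y' r' x * baseOut μ X Y R y' x *
              patProp μ X Y R r' x y₀ := by
          simp [Finset.sum_mul]
      _ = ∑ r' : Fin p → Bool, ∑ y' : Fin p → 𝒴, J r' y' * c := by
          simp only [hterm]
      _ = PX * c := by
          simp_rw [← Finset.sum_mul]
          rw [hpart]
  rw [hLHS, hterm r y, hden, mul_div_mul_right _ _ hcpos.ne']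

end
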